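/- Let π_ρ(x,z) ∝ exp(-f(x) - g(z) - ‖x-z‖²/(2ρ²)) be a proper joint density on ℝ^N × ℝ^N with quadratic coupling, and assume f and g are continuous with exp(-f), exp(-g) integrable and bounded. Then for (X,Z) ~ π_ρ, the difference X - Z converges in probability to 0 as ρ → 0; i.e., for every ε > 0, P(‖X-Z‖ > ε) → 0 as ρ² → 0. -/

import Mathlib

open MeasureTheory Filter

/-- Under the split distribution `π_ρ` with quadratic coupling, `X - Z → 0` in
probability as `ρ² → 0`. -/
theorem stmt13 (N : ℕ) (f g : EuclideanSpace ℝ (Fin N) → ℝ)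
    (hf : Continuous f) (hg : Continuous g)
    (hfint : Integrable fun x => Real.exp (-f x))
    (hgint : Integrable fun x => Real.exp (-g x))
    (hfb : ∃ B, ∀ x, Real.exp (-f x) ≤ B) (hgb : ∃ B, ∀ x, Real.exp (-g x) ≤ B)
    (hfg : Integrable fun x => Real.exp (-f x - g x))
    (hpos : 0 < ∫ x, Real.exp (-f x - g x))
    (w : ℝ → EuclideanSpace ℝ (Fin N) × EuclideanSpace ℝ (Fin N) → ℝ)
    (hw : ∀ ρ p, w ρ p = Real.exp (-f p.1 - g p.2 - ‖p.1 - p.2‖ ^ 2 / (2 * ρ))) :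
    ∀ ε > (0:ℝ),
      Tendsto
        (fun ρ : ℝ =>
          (∫ p in {q : EuclideanSpace ℝ (Fin N) × EuclideanSpace ℝ (Fin N) |
              ε < ‖q.1 - q.2‖}, w ρ p) / ∫ p, w ρ p)
        (nhdsWithin 0 (Set.Ioi 0)) (nhds 0) := by
  intro ε hε
  set δ : ℝ := 2 * ε / 3 with hδdef
  have hδε : δ ^ 2 < ε ^ 2 := by rw [hδdef]; nlinarith
  have hδ0 : 0 ≤ δ := by positivity
  -- compact set where the density is bounded below
  set K : Set (EuclideanSpace ℝ (Fin N)) := Metric.closedBall 0 (ε / 3) with hKdef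
  have hKc : IsCompact K := isCompact_closedBall _ _
  set S : Set ((EuclideanSpace ℝ (Fin N)) × (EuclideanSpace ℝ (Fin N))) := K ×ˢ K with hSdef
  have hSc : IsCompact S := hKc.prod hKc
  have hSne : S.Nonempty :=
    ⟨(0, 0), ⟨Metric.mem_closedBall_self (by positivity),
      Metric.mem_closedBall_self (by positivity)⟩⟩
  have hφc : Continuous (fun p : (EuclideanSpace ℝ (Fin N)) × (EuclideanSpace ℝ (Fin N)) => Real.exp (-f p.1 - g p.2)) :=
    by fun_prop
  obtain ⟨p₀, hp₀, hmin⟩ := hSc.exists_isMinOn hSne hφc.continuousOn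
  set m : ℝ := Real.exp (-f p₀.1 - g p₀.2) with hmdef
  have hm0 : 0 < m := Real.exp_pos _
  -- volume of S
  set V : ℝ := (volume S).toReal with hVdef
  have hV0 : 0 < V := by
    refine ENNReal.toReal_pos ?_ hSc.measure_lt_top.ne
    rw [hSdef, Measure.volume_eq_prod, Measure.prod_prod]
    have hKpos : 0 < volume K := by
      exact Metric.measure_closedBall_pos volume 0 (by positivity)
    exact (ENNReal.mul_pos hKpos.ne' hKpos.ne').ne'
  -- the constant C
  set C : ℝ := (∫ x, Real.exp (-f x)) * (∫ x, Real.exp (-g x)) with hCdef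
  have hC0 : 0 ≤ C :=
    mul_nonneg (integral_nonneg fun x => (Real.exp_pos _).le)
      (integral_nonneg fun x => (Real.exp_pos _).le)
  -- the integrable product bound
  have hbint : Integrable (fun p : (EuclideanSpace ℝ (Fin N)) × (EuclideanSpace ℝ (Fin N)) => Real.exp (-f p.1) * Real.exp (-g p.2)) := by
    rw [Measure.volume_eq_prod]
    exact hfint.mul_prod hgint
  set T : Set ((EuclideanSpace ℝ (Fin N)) × (EuclideanSpace ℝ (Fin N))) := {q : (EuclideanSpace ℝ (Fin N)) × (EuclideanSpace ℝ (Fin N)) | ε < ‖q.1 - q.2‖} with hTdef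
  have hTmeas : MeasurableSet T :=
    (isOpen_lt continuous_const ((continuous_fst.sub continuous_snd).norm)).measurableSet
  -- squeeze
  refine squeeze_zero' (g := fun ρ => C / (m * V) * Real.exp (-(ε ^ 2 - δ ^ 2) / (2 * ρ))) ?_ ?_ ?_
  · filter_upwards [self_mem_nhdsWithin] with ρ hρ
    refine div_nonneg (integral_nonneg fun p => ?_) (integral_nonneg fun p => ?_) <;>
      rw [hw] <;> exact (Real.exp_pos _).le
  · filter_upwards [self_mem_nhdsWithin] with ρ hρ
    have hρ0 : (0:ℝ) < ρ := hρ
    have h2ρ : (0:ℝ) < 2 * ρ := by linarith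
    -- continuity and integrability of w ρ
    have hweq : w ρ = fun p : (EuclideanSpace ℝ (Fin N)) × (EuclideanSpace ℝ (Fin N)) => Real.exp (-f p.1 - g p.2 - ‖p.1 - p.2‖ ^ 2 / (2 * ρ)) :=
      funext (hw ρ)
    have hwc : Continuous (w ρ) := by
      rw [hweq]
      exact (((hf.comp continuous_fst).neg.sub (hg.comp continuous_snd)).sub
        (((continuous_fst.sub continuous_snd).norm.pow 2).div_const _)).rexp
    have hWint : Integrable (w ρ) := by
      refine hbint.mono' hwc.aestronglyMeasurable (ae_of_all _ fun p => ?_)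
      rw [hw, Real.norm_eq_abs, abs_of_pos (Real.exp_pos _), ← Real.exp_add]
      refine Real.exp_le_exp.2 ?_
      have hq : 0 ≤ ‖p.1 - p.2‖ ^ 2 / (2 * ρ) := div_nonneg (by positivity) h2ρ.le
      linarith
    have hwpos : ∀ p, 0 ≤ w ρ p := fun p => by rw [hw]; exact (Real.exp_pos _).le
    -- numerator bound
    have hnum : (∫ p in T, w ρ p) ≤ Real.exp (-ε ^ 2 / (2 * ρ)) * C := by
      calc (∫ p in T, w ρ p)
          ≤ ∫ p in T, Real.exp (-ε ^ 2 / (2 * ρ)) *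
              (Real.exp (-f p.1) * Real.exp (-g p.2)) := by
            refine setIntegral_mono_on hWint.integrableOn
              ((hbint.const_mul _).integrableOn) hTmeas fun p hp => ?_
            rw [hw, ← Real.exp_add, ← Real.exp_add]
            refine Real.exp_le_exp.2 ?_
            have h1 : ε ^ 2 ≤ ‖p.1 - p.2‖ ^ 2 := by
              have : ε ≤ ‖p.1 - p.2‖ := le_of_lt hp
              nlinarith [norm_nonneg (p.1 - p.2)]
            have h2 : ε ^ 2 / (2 * ρ) ≤ ‖p.1 - p.2‖ ^ 2 / (2 * ρ) :=
              (div_le_div_iff_of_pos_right h2ρ).2 h1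
            have h3 : -ε ^ 2 / (2 * ρ) = -(ε ^ 2 / (2 * ρ)) := by ring
            linarith
        _ ≤ ∫ p : (EuclideanSpace ℝ (Fin N)) × (EuclideanSpace ℝ (Fin N)),
              Real.exp (-ε ^ 2 / (2 * ρ)) *
              (Real.exp (-f p.1) * Real.exp (-g p.2)) := by
            refine setIntegral_le_integral (hbint.const_mul _)
              (ae_of_all _ fun p => ?_)
            positivity
        _ = Real.exp (-ε ^ 2 / (2 * ρ)) * C := by
            rw [integral_const_mul, hCdef]
            congr 1
            exact integral_prod_mul (fun x => Real.exp (-f x)) (fun y => Real.exp (-g y))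
    -- denominator bound
    have hden : m * Real.exp (-δ ^ 2 / (2 * ρ)) * V ≤ ∫ p, w ρ p := by
      have hconst : m * Real.exp (-δ ^ 2 / (2 * ρ)) * V ≤ ∫ p in S, w ρ p := by
        refine setIntegral_ge_of_const_le_real hSc.measurableSet hSc.measure_lt_top.ne
          (fun p hp => ?_) hWint.integrableOn
        rw [hw]
        have hnorm : ‖p.1 - p.2‖ ≤ δ := by
          have h1 : ‖p.1‖ ≤ ε / 3 := by
            simpa [hKdef, Metric.mem_closedBall] using hp.1
          have h2 : ‖p.2‖ ≤ ε / 3 := by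
            simpa [hKdef, Metric.mem_closedBall] using hp.2
          calc ‖p.1 - p.2‖ ≤ ‖p.1‖ + ‖p.2‖ := norm_sub_le _ _
            _ ≤ δ := by rw [hδdef]; linarith
        have hsq : ‖p.1 - p.2‖ ^ 2 ≤ δ ^ 2 := by
          nlinarith [norm_nonneg (p.1 - p.2)]
        have hdiv : ‖p.1 - p.2‖ ^ 2 / (2 * ρ) ≤ δ ^ 2 / (2 * ρ) :=
          (div_le_div_iff_of_pos_right h2ρ).2 hsq
        have hmle : m ≤ Real.exp (-f p.1 - g p.2) := hmin hp
        calc m * Real.exp (-δ ^ 2 / (2 * ρ))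
            ≤ Real.exp (-f p.1 - g p.2) * Real.exp (-δ ^ 2 / (2 * ρ)) :=
              mul_le_mul_of_nonneg_right hmle (Real.exp_pos _).le
          _ = Real.exp (-f p.1 - g p.2 + -δ ^ 2 / (2 * ρ)) := (Real.exp_add _ _).symm
          _ ≤ Real.exp (-f p.1 - g p.2 + -(‖p.1 - p.2‖ ^ 2 / (2 * ρ))) := by
              refine Real.exp_le_exp.2 ?_
              have : -δ ^ 2 / (2 * ρ) = -(δ ^ 2 / (2 * ρ)) := by ring
              linarith
          _ = Real.exp (-f p.1 - g p.2 + -(‖p.1 - p.2‖ ^ 2 / (2 * ρ))) := rfl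
      calc m * Real.exp (-δ ^ 2 / (2 * ρ)) * V ≤ ∫ p in S, w ρ p := hconst
        _ ≤ ∫ p, w ρ p := setIntegral_le_integral hWint (ae_of_all _ hwpos)
    have hD0 : 0 < ∫ p, w ρ p :=
      lt_of_lt_of_le (by positivity) hden
    -- put it together
    rw [div_le_iff₀ hD0]
    have hexp : Real.exp (-(ε ^ 2 - δ ^ 2) / (2 * ρ)) * Real.exp (-δ ^ 2 / (2 * ρ)) =
        Real.exp (-ε ^ 2 / (2 * ρ)) := by
      rw [← Real.exp_add]
      congr 1
      field_simp
      ring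
    calc (∫ p in T, w ρ p) ≤ Real.exp (-ε ^ 2 / (2 * ρ)) * C := hnum
      _ = C / (m * V) * Real.exp (-(ε ^ 2 - δ ^ 2) / (2 * ρ)) *
          (m * Real.exp (-δ ^ 2 / (2 * ρ)) * V) := by
          rw [← hexp]; field_simp
      _ ≤ C / (m * V) * Real.exp (-(ε ^ 2 - δ ^ 2) / (2 * ρ)) * ∫ p, w ρ p := by
          refine mul_le_mul_of_nonneg_left hden (by positivity)
  · -- the bounding function tends to 0
    have h1 : Tendsto (fun ρ : ℝ => -(ε ^ 2 - δ ^ 2) / (2 * ρ)) (nhdsWithin 0 (Set.Ioi 0))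
        atBot := by
      have heq : (fun ρ : ℝ => -(ε ^ 2 - δ ^ 2) / (2 * ρ)) =
          fun ρ : ℝ => (-(ε ^ 2 - δ ^ 2) / 2) * ρ⁻¹ := by
        funext ρ; field_simp
      rw [heq]
      refine Tendsto.const_mul_atTop_of_neg ?_ tendsto_inv_nhdsGT_zero
      have : 0 < ε ^ 2 - δ ^ 2 := by linarith
      linarith
    have h2 : Tendsto (fun ρ : ℝ => Real.exp (-(ε ^ 2 - δ ^ 2) / (2 * ρ)))
        (nhdsWithin 0 (Set.Ioi 0)) (nhds 0) := Real.tendsto_exp_atBot.comp h1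
    have h3 := h2.const_mul (C / (m * V))
    simpa using h3
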